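/- Let F be a field in which every element has a cube root (e.g. F algebraically closed, or F = ℝ). Let L and L' be 10-dimensional symplectic alternating algebras given on standard bases by presentations P(r): (x_2 y_4, y_5) = r, (x_1 y_2, y_4) = 1, (y_1 y_2, y_5) = 1, (y_1 y_3, y_5) = 1 and P(s) respectively, with r, s ∈ F*. Then L ≅ L'. More precisely, if s/r = b^3 for b ∈ F*, then the map sending x_1 ↦ x_1, y_1 ↦ y_1, x_2 ↦ b x_2, y_2 ↦ (1/b) y_2, x_3 ↦ b x_3, y_3 ↦ (1/b) y_3, x_4 ↦ (1/b) x_4, y_4 ↦ b y_4, x_5 ↦ (1/b) x_5, y_5 ↦ b y_5 transforms the presentation P(r) into P(s). -/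

import Mathlib

/-- A symplectic alternating algebra: a vector space with a non-degenerate
alternating bilinear form and an alternating bilinear product satisfying
`(x·y, z) = (y·z, x)`. -/
structure SAA (F : Type*) [Field F] (L : Type*) [AddCommGroup L] [Module F L] where
  form : L →ₗ[F] L →ₗ[F] F
  mul : L →ₗ[F] L →ₗ[F] L
  form_alt : ∀ x : L, form x x = 0
  form_nondeg : ∀ x : L, (∀ y : L, form x y = 0) → x = 0
  mul_alt : ∀ x : L, mul x x = 0
  invar : ∀ x y z : L, form (mul x y) z = form (mul y z) x

/-- The presentation `P₁₀^{(3,6)}(r)` on a standard basis `x 0,…,x 4, y 0,…,y 4`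
(indices shifted down by one from the paper): the nonzero triple values are
`(x₂y₄,y₅) = r`, `(x₁y₂,y₄) = 1`, `(y₁y₂,y₅) = 1`, `(y₁y₃,y₅) = 1`. -/
def IsPres36 {F : Type*} [Field F] {L : Type*} [AddCommGroup L] [Module F L]
    (S : SAA F L) (x y : Fin 5 → L) (r : F) : Prop :=
  (∀ i j, S.form (x i) (x j) = 0) ∧
  (∀ i j, S.form (y i) (y j) = 0) ∧
  (∀ i j, S.form (x i) (y j) = if i = j then 1 else 0) ∧
  Submodule.span F (Set.range x ∪ Set.range y) = ⊤ ∧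
  S.form (S.mul (x 1) (y 3)) (y 4) = r ∧
  S.form (S.mul (x 0) (y 1)) (y 3) = 1 ∧
  S.form (S.mul (y 0) (y 1)) (y 4) = 1 ∧
  S.form (S.mul (y 0) (y 2)) (y 4) = 1 ∧
  (∀ u ∈ Set.range x ∪ Set.range y, ∀ v ∈ Set.range x ∪ Set.range y,
    ∀ w ∈ Set.range x ∪ Set.range y,
      ({u, v, w} : Set L) ≠ {x 1, y 3, y 4} →
      ({u, v, w} : Set L) ≠ {x 0, y 1, y 3} →
      ({u, v, w} : Set L) ≠ {y 0, y 1, y 4} →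
      ({u, v, w} : Set L) ≠ {y 0, y 2, y 4} →
        S.form (S.mul u v) w = 0)

set_option linter.unusedSectionVars false

abbrev I10 := Fin 5 ⊕ Fin 5

section Perm

lemma triple_perm_set {α : Type*} {a b c p q w : α} (hpq : p ≠ q) (hpw : p ≠ w) (hqw : q ≠ w)
    (h : ({a,b,c} : Set α) = {p,q,w}) :
    (a=p∧b=q∧c=w) ∨ (a=q∧b=w∧c=p) ∨ (a=w∧b=p∧c=q) ∨
    (a=q∧b=p∧c=w) ∨ (a=p∧b=w∧c=q) ∨ (a=w∧b=q∧c=p) := by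
  have hm := Set.ext_iff.mp h
  have ha := (hm a).mp (by simp)
  have hb := (hm b).mp (by simp)
  have hc := (hm c).mp (by simp)
  have hp := (hm p).mpr (by simp)
  have hq := (hm q).mpr (by simp)
  have hw := (hm w).mpr (by simp)
  simp only [Set.mem_insert_iff, Set.mem_singleton_iff] at ha hb hc hp hq hw
  rcases ha with rfl|rfl|rfl <;> rcases hb with rfl|rfl|rfl <;> rcases hc with rfl|rfl|rfl <;>
    simp_all <;> tauto

lemma triple_perm_finset {α : Type*} [DecidableEq α] {a b c p q w : α}
    (hpq : p ≠ q) (hpw : p ≠ w) (hqw : q ≠ w)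
    (h : ({a,b,c} : Finset α) = {p,q,w}) :
    (a=p∧b=q∧c=w) ∨ (a=q∧b=w∧c=p) ∨ (a=w∧b=p∧c=q) ∨
    (a=q∧b=p∧c=w) ∨ (a=p∧b=w∧c=q) ∨ (a=w∧b=q∧c=p) := by
  have hm := Finset.ext_iff.mp h
  have ha := (hm a).mp (by simp)
  have hb := (hm b).mp (by simp)
  have hc := (hm c).mp (by simp)
  have hp := (hm p).mpr (by simp)
  have hq := (hm q).mpr (by simp)
  have hw := (hm w).mpr (by simp)
  simp only [Finset.mem_insert, Finset.mem_singleton] at ha hb hc hp hq hw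
  rcases ha with rfl|rfl|rfl <;> rcases hb with rfl|rfl|rfl <;> rcases hc with rfl|rfl|rfl <;>
    simp_all <;> tauto

lemma triple_set_perm_eq {α : Type*} {a b c p q w : α}
    (h : (a=p∧b=q∧c=w) ∨ (a=q∧b=w∧c=p) ∨ (a=w∧b=p∧c=q) ∨
    (a=q∧b=p∧c=w) ∨ (a=p∧b=w∧c=q) ∨ (a=w∧b=q∧c=p)) :
    ({a,b,c} : Set α) = {p,q,w} := by
  rcases h with ⟨rfl,rfl,rfl⟩|⟨rfl,rfl,rfl⟩|⟨rfl,rfl,rfl⟩|⟨rfl,rfl,rfl⟩|⟨rfl,rfl,rfl⟩|⟨rfl,rfl,rfl⟩ <;>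
    (ext z; simp; try tauto)

lemma triple_finset_perm_eq {α : Type*} [DecidableEq α] {a b c p q w : α}
    (h : (a=p∧b=q∧c=w) ∨ (a=q∧b=w∧c=p) ∨ (a=w∧b=p∧c=q) ∨
    (a=q∧b=p∧c=w) ∨ (a=p∧b=w∧c=q) ∨ (a=w∧b=q∧c=p)) :
    ({a,b,c} : Finset α) = {p,q,w} := by
  rcases h with ⟨rfl,rfl,rfl⟩|⟨rfl,rfl,rfl⟩|⟨rfl,rfl,rfl⟩|⟨rfl,rfl,rfl⟩|⟨rfl,rfl,rfl⟩|⟨rfl,rfl,rfl⟩ <;>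
    (ext z; simp; try tauto)

end Perm

section Basics
variable {F : Type*} [Field F] {L : Type*} [AddCommGroup L] [Module F L]

lemma SAA.form_anti (S : SAA F L) (a b : L) : S.form a b = - S.form b a := by
  have h := S.form_alt (a + b)
  simp only [map_add, LinearMap.add_apply, S.form_alt] at h
  linear_combination h

lemma SAA.mul_anti (S : SAA F L) (a b : L) : S.mul a b = - S.mul b a := by
  have h := S.mul_alt (a + b)
  simp only [map_add, LinearMap.add_apply, S.mul_alt] at h
  rw [eq_neg_iff_add_eq_zero]
  linear_combination (norm := abel) h

def tv (p q w : I10) (v : F) (a b c : I10) : F :=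
  if (a,b,c) = (p,q,w) ∨ (a,b,c) = (q,w,p) ∨ (a,b,c) = (w,p,q) then v
  else if (a,b,c) = (q,p,w) ∨ (a,b,c) = (p,w,q) ∨ (a,b,c) = (w,q,p) then -v else 0

def Tval (r : F) (a b c : I10) : F :=
  tv (.inl 1) (.inr 3) (.inr 4) r a b c + tv (.inl 0) (.inr 1) (.inr 3) 1 a b c
  + tv (.inr 0) (.inr 1) (.inr 4) 1 a b c + tv (.inr 0) (.inr 2) (.inr 4) 1 a b c

lemma tv_cond_finset {a b c p q w : I10}
    (h : ((a,b,c) = (p,q,w) ∨ (a,b,c) = (q,w,p) ∨ (a,b,c) = (w,p,q)) ∨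
         ((a,b,c) = (q,p,w) ∨ (a,b,c) = (p,w,q) ∨ (a,b,c) = (w,q,p))) :
    ({a,b,c} : Finset I10) = {p,q,w} := by
  apply triple_finset_perm_eq
  rcases h with (h|h|h)|(h|h|h) <;> (simp only [Prod.mk.injEq] at h; tauto)

lemma tv_eq_zero {a b c p q w : I10} (v : F) (hne : ({a,b,c} : Finset I10) ≠ {p,q,w}) :
    tv p q w v a b c = 0 := by
  rw [tv, if_neg (fun hc => hne (tv_cond_finset (Or.inl hc))),
    if_neg (fun hc => hne (tv_cond_finset (Or.inr hc)))]

lemma Tval_eq_zero {a b c : I10} (r : F)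
    (h1 : ({a,b,c} : Finset I10) ≠ {.inl 1, .inr 3, .inr 4})
    (h2 : ({a,b,c} : Finset I10) ≠ {.inl 0, .inr 1, .inr 3})
    (h3 : ({a,b,c} : Finset I10) ≠ {.inr 0, .inr 1, .inr 4})
    (h4 : ({a,b,c} : Finset I10) ≠ {.inr 0, .inr 2, .inr 4}) :
    Tval r a b c = 0 := by
  rw [Tval, tv_eq_zero _ h1, tv_eq_zero _ h2, tv_eq_zero _ h3, tv_eq_zero _ h4]; ring

end Basics

section Pres
variable {F : Type*} [Field F] {L : Type*} [AddCommGroup L] [Module F L]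

def ee (x y : Fin 5 → L) : I10 → L := Sum.elim x y

def fval : I10 → I10 → F
  | .inl i, .inr j => if i = j then 1 else 0
  | .inr i, .inl j => if i = j then -1 else 0
  | _, _ => 0

variable {S : SAA F L} {x y : Fin 5 → L} {r : F}

lemma range_ee (x y : Fin 5 → L) : Set.range (ee x y) = Set.range x ∪ Set.range y :=
  Set.Sum.elim_range x y

lemma form_ee (h : IsPres36 S x y r) (a b : I10) :
    S.form (ee x y a) (ee x y b) = fval a b := by
  obtain ⟨hxx, hyy, hxy, -⟩ := h
  cases a with
  | inl i => cases b with
    | inl j => simpa [ee, fval] using hxx i j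
    | inr j => simpa [ee, fval] using hxy i j
  | inr i => cases b with
    | inl j =>
        simp only [ee, fval, Sum.elim_inr, Sum.elim_inl]
        rw [S.form_anti, hxy j i]
        by_cases hij : i = j <;> simp [hij, eq_comm]
    | inr j => simpa [ee, fval] using hyy i j

lemma indep_ee (h : IsPres36 S x y r) : LinearIndependent F (ee x y) := by
  rw [Fintype.linearIndependent_iff]
  intro g hg a
  have key : ∀ b : I10, ∑ a : I10, g a * fval a b = 0 := by
    intro b
    have := congrArg (fun z => S.form z (ee x y b)) hg
    simp only [map_sum, LinearMap.sum_apply, map_smul, LinearMap.smul_apply,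
      smul_eq_mul, map_zero, LinearMap.zero_apply] at this
    calc ∑ a : I10, g a * fval a b = ∑ a : I10, g a * S.form (ee x y a) (ee x y b) := by
          refine Finset.sum_congr rfl fun a _ => by rw [form_ee h]
      _ = 0 := this
  cases a with
  | inl i =>
      have := key (.inr i)
      rw [Fintype.sum_sum_type] at this
      simpa [fval, Finset.sum_ite_eq', mul_ite] using this
  | inr i =>
      have := key (.inl i)
      rw [Fintype.sum_sum_type] at this
      simpa [fval, Finset.sum_ite_eq', mul_ite] using this

noncomputable def presBasis (h : IsPres36 S x y r) : Module.Basis I10 F L :=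
  Module.Basis.mk (indep_ee h) (by rw [range_ee, h.2.2.2.1])

lemma presBasis_apply (h : IsPres36 S x y r) (a : I10) : presBasis h a = ee x y a :=
  Module.Basis.mk_apply _ _ _

lemma zero_of_forms (h : IsPres36 S x y r) (z : L)
    (hz : ∀ c : I10, S.form z (ee x y c) = 0) : z = 0 := by
  apply S.form_nondeg
  have : S.form z = (0 : L →ₗ[F] F) := by
    apply LinearMap.ext_on h.2.2.2.1
    intro u hu
    rw [← range_ee] at hu
    obtain ⟨c, rfl⟩ := hu
    simpa using hz c
  intro u; rw [this]; rfl

end Pres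

section Master
variable {F : Type*} [Field F] {L : Type*} [AddCommGroup L] [Module F L]
variable {S : SAA F L} {x y : Fin 5 → L} {r : F}

set_option maxHeartbeats 1000000 in
lemma T_ee (h : IsPres36 S x y r) (a b c : I10) :
    S.form (S.mul (ee x y a) (ee x y b)) (ee x y c) = Tval r a b c := by
  have hinj : Function.Injective (ee x y) := (indep_ee h).injective
  obtain ⟨hxx, hyy, hxy, hspan, hg1, hg2, hg3, hg4, hz⟩ := h
  set T : I10 → I10 → I10 → F :=
    fun a b c => S.form (S.mul (ee x y a) (ee x y b)) (ee x y c) with hT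
  show T a b c = Tval r a b c
  have hcyc : ∀ a b c, T a b c = T b c a := fun a b c => S.invar _ _ _
  have hsw : ∀ a b c, T a b c = - T b a c := by
    intro a b c
    rw [hT]
    simp only
    rw [S.mul_anti]
    simp
  have six : ∀ p q w (v : F), T p q w = v →
      T p q w = v ∧ T q w p = v ∧ T w p q = v ∧
      T q p w = -v ∧ T p w q = -v ∧ T w q p = -v := by
    intro p q w v hv
    have e2 : T q w p = v := (hcyc p q w).symm.trans hv
    have e3 : T w p q = v := (hcyc w p q).trans hv
    have e4 : T q p w = -v := by rw [hsw, hv]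
    have e5 : T p w q = -v := by rw [hsw, e3]
    have e6 : T w q p = -v := by rw [hsw, e2]
    exact ⟨hv, e2, e3, e4, e5, e6⟩
  have hmem : ∀ a : I10, ee x y a ∈ Set.range x ∪ Set.range y :=
    fun a => (range_ee x y) ▸ Set.mem_range_self a
  have key : ∀ p q w : I10, p ≠ q → p ≠ w → q ≠ w → ∀ a b c : I10,
      ({ee x y a, ee x y b, ee x y c} : Set L) = {ee x y p, ee x y q, ee x y w} →
      ({a,b,c} : Finset I10) = {p,q,w} := by
    intro p q w hpq hpw hqw a b c hSeq
    have hperm := triple_perm_set (fun hh => hpq (hinj hh)) (fun hh => hpw (hinj hh))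
      (fun hh => hqw (hinj hh)) hSeq
    apply triple_finset_perm_eq
    rcases hperm with ⟨h1,h2,h3⟩|⟨h1,h2,h3⟩|⟨h1,h2,h3⟩|⟨h1,h2,h3⟩|⟨h1,h2,h3⟩|⟨h1,h2,h3⟩ <;>
      (replace h1 := hinj h1; replace h2 := hinj h2; replace h3 := hinj h3; tauto)
  have hvan : ∀ a b c : I10,
      ({a,b,c} : Finset I10) ≠ {.inl 1, .inr 3, .inr 4} →
      ({a,b,c} : Finset I10) ≠ {.inl 0, .inr 1, .inr 3} →
      ({a,b,c} : Finset I10) ≠ {.inr 0, .inr 1, .inr 4} →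
      ({a,b,c} : Finset I10) ≠ {.inr 0, .inr 2, .inr 4} →
      T a b c = 0 := by
    intro a b c n1 n2 n3 n4
    exact hz _ (hmem a) _ (hmem b) _ (hmem c)
      (fun hSeq => n1 (key _ _ _ (by decide) (by decide) (by decide) a b c hSeq))
      (fun hSeq => n2 (key _ _ _ (by decide) (by decide) (by decide) a b c hSeq))
      (fun hSeq => n3 (key _ _ _ (by decide) (by decide) (by decide) a b c hSeq))
      (fun hSeq => n4 (key _ _ _ (by decide) (by decide) (by decide) a b c hSeq))
  have hG1 : T (.inl 1) (.inr 3) (.inr 4) = r := hg1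
  have hG2 : T (.inl 0) (.inr 1) (.inr 3) = 1 := hg2
  have hG3 : T (.inr 0) (.inr 1) (.inr 4) = 1 := hg3
  have hG4 : T (.inr 0) (.inr 2) (.inr 4) = 1 := hg4
  by_cases h1 : ({a,b,c} : Finset I10) = {.inl 1, .inr 3, .inr 4}
  · obtain ⟨E1,E2,E3,E4,E5,E6⟩ := six _ _ _ r hG1
    rcases triple_perm_finset (by decide) (by decide) (by decide) h1 with
      ⟨rfl,rfl,rfl⟩|⟨rfl,rfl,rfl⟩|⟨rfl,rfl,rfl⟩|⟨rfl,rfl,rfl⟩|⟨rfl,rfl,rfl⟩|⟨rfl,rfl,rfl⟩ <;>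
      simp (config := { decide := true }) only [Tval, tv] <;>
      first
        | (rw [E1]; norm_num) | (rw [E2]; norm_num) | (rw [E3]; norm_num)
        | (rw [E4]; norm_num) | (rw [E5]; norm_num) | (rw [E6]; norm_num)
  by_cases h2 : ({a,b,c} : Finset I10) = {.inl 0, .inr 1, .inr 3}
  · obtain ⟨E1,E2,E3,E4,E5,E6⟩ := six _ _ _ 1 hG2
    rcases triple_perm_finset (by decide) (by decide) (by decide) h2 with
      ⟨rfl,rfl,rfl⟩|⟨rfl,rfl,rfl⟩|⟨rfl,rfl,rfl⟩|⟨rfl,rfl,rfl⟩|⟨rfl,rfl,rfl⟩|⟨rfl,rfl,rfl⟩ <;>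
      simp (config := { decide := true }) only [Tval, tv] <;>
      first
        | (rw [E1]; norm_num) | (rw [E2]; norm_num) | (rw [E3]; norm_num)
        | (rw [E4]; norm_num) | (rw [E5]; norm_num) | (rw [E6]; norm_num)
  by_cases h3 : ({a,b,c} : Finset I10) = {.inr 0, .inr 1, .inr 4}
  · obtain ⟨E1,E2,E3,E4,E5,E6⟩ := six _ _ _ 1 hG3
    rcases triple_perm_finset (by decide) (by decide) (by decide) h3 with
      ⟨rfl,rfl,rfl⟩|⟨rfl,rfl,rfl⟩|⟨rfl,rfl,rfl⟩|⟨rfl,rfl,rfl⟩|⟨rfl,rfl,rfl⟩|⟨rfl,rfl,rfl⟩ <;>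
      simp (config := { decide := true }) only [Tval, tv] <;>
      first
        | (rw [E1]; norm_num) | (rw [E2]; norm_num) | (rw [E3]; norm_num)
        | (rw [E4]; norm_num) | (rw [E5]; norm_num) | (rw [E6]; norm_num)
  by_cases h4 : ({a,b,c} : Finset I10) = {.inr 0, .inr 2, .inr 4}
  · obtain ⟨E1,E2,E3,E4,E5,E6⟩ := six _ _ _ 1 hG4
    rcases triple_perm_finset (by decide) (by decide) (by decide) h4 with
      ⟨rfl,rfl,rfl⟩|⟨rfl,rfl,rfl⟩|⟨rfl,rfl,rfl⟩|⟨rfl,rfl,rfl⟩|⟨rfl,rfl,rfl⟩|⟨rfl,rfl,rfl⟩ <;>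
      simp (config := { decide := true }) only [Tval, tv] <;>
      first
        | (rw [E1]; norm_num) | (rw [E2]; norm_num) | (rw [E3]; norm_num)
        | (rw [E4]; norm_num) | (rw [E5]; norm_num) | (rw [E6]; norm_num)
  · rw [Tval_eq_zero r h1 h2 h3 h4]
    exact hvan a b c h1 h2 h3 h4

end Master

section MulIso
variable {F : Type*} [Field F] {L : Type*} [AddCommGroup L] [Module F L]
variable {S : SAA F L} {x y : Fin 5 → L} {r : F}

def mcoef (r : F) (a b : I10) : I10 → F
  | .inl i => Tval r a b (.inr i)
  | .inr i => - Tval r a b (.inl i)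

lemma mul_ee (h : IsPres36 S x y r) (a b : I10) :
    S.mul (ee x y a) (ee x y b) = ∑ k : I10, mcoef r a b k • ee x y k := by
  have key : ∀ c : I10,
      S.form (S.mul (ee x y a) (ee x y b) - ∑ k : I10, mcoef r a b k • ee x y k)
        (ee x y c) = 0 := by
    intro c
    rw [map_sub, LinearMap.sub_apply, T_ee h, map_sum, LinearMap.sum_apply]
    have hterm : ∀ k : I10, S.form (mcoef r a b k • ee x y k) (ee x y c)
        = mcoef r a b k * fval k c := by
      intro k
      rw [map_smul, LinearMap.smul_apply, smul_eq_mul, form_ee h]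
    rw [Finset.sum_congr rfl (fun k _ => hterm k)]
    cases c with
    | inl j =>
        rw [Fintype.sum_sum_type]
        simp [mcoef, fval, mul_ite, Finset.sum_ite_eq']
    | inr j =>
        rw [Fintype.sum_sum_type]
        simp [mcoef, fval, mul_ite, Finset.sum_ite_eq']
  exact sub_eq_zero.mp (zero_of_forms h _ key)

lemma iso_of_pres {L' : Type*} [AddCommGroup L'] [Module F L'] {S' : SAA F L'}
    {x' y' : Fin 5 → L'} {s : F}
    (h : IsPres36 S x y s) (h' : IsPres36 S' x' y' s) :
    ∃ φ : L ≃ₗ[F] L',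
      (∀ a b : L, S'.form (φ a) (φ b) = S.form a b) ∧
      (∀ a b : L, φ (S.mul a b) = S'.mul (φ a) (φ b)) := by
  refine ⟨(presBasis h).equiv (presBasis h') (Equiv.refl I10), ?_, ?_⟩
  all_goals
    set φ := (presBasis h).equiv (presBasis h') (Equiv.refl I10) with hφdef
    have hφ : ∀ a : I10, φ (ee x y a) = ee x' y' a := by
      intro a
      rw [← presBasis_apply h a, ← presBasis_apply h' a, hφdef]
      exact (presBasis h).equiv_apply a (presBasis h') (Equiv.refl I10)
  · have heq : S'.form.compl₁₂ (φ : L →ₗ[F] L') (φ : L →ₗ[F] L') = S.form := by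
      refine (presBasis h).ext fun a => (presBasis h).ext fun b => ?_
      rw [presBasis_apply, presBasis_apply]
      simp only [LinearMap.compl₁₂_apply, LinearEquiv.coe_coe]
      rw [hφ, hφ, form_ee h, form_ee h']
    intro a b
    have := LinearMap.congr_fun (LinearMap.congr_fun heq a) b
    simpa using this
  · have heq : (S.mul).compr₂ (φ : L →ₗ[F] L')
        = (S'.mul).compl₁₂ (φ : L →ₗ[F] L') (φ : L →ₗ[F] L') := by
      refine (presBasis h).ext fun a => (presBasis h).ext fun b => ?_
      rw [presBasis_apply, presBasis_apply]
      simp only [LinearMap.compr₂_apply, LinearMap.compl₁₂_apply, LinearEquiv.coe_coe]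
      rw [mul_ee h a b, hφ, hφ, mul_ee h' a b, map_sum]
      refine Finset.sum_congr rfl fun k _ => ?_
      rw [map_smul, hφ]
    intro a b
    have := LinearMap.congr_fun (LinearMap.congr_fun heq a) b
    simpa using this

end MulIso

section Rescale
variable {F : Type*} [Field F] {L : Type*} [AddCommGroup L] [Module F L]

set_option maxHeartbeats 1000000 in
lemma rescale {S : SAA F L} {x y : Fin 5 → L} {r s : F}
    (h : IsPres36 S x y r) (b : F) (hb : b ≠ 0) (hseq : s = r * b ^ 3) :
    IsPres36 S ![x 0, b • x 1, b • x 2, b⁻¹ • x 3, b⁻¹ • x 4]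
      ![y 0, b⁻¹ • y 1, b⁻¹ • y 2, b • y 3, b • y 4] s := by
  obtain ⟨hxx, hyy, hxy, hspan, hg1, hg2, hg3, hg4, hz⟩ := id h
  set cx : Fin 5 → F := ![1, b, b, b⁻¹, b⁻¹] with hcx
  set cy : Fin 5 → F := ![1, b⁻¹, b⁻¹, b, b] with hcy
  have hxt : ∀ i, (![x 0, b • x 1, b • x 2, b⁻¹ • x 3, b⁻¹ • x 4] : Fin 5 → L) i
      = cx i • x i := by
    intro i; fin_cases i <;> simp [hcx]
  have hyt : ∀ i, (![y 0, b⁻¹ • y 1, b⁻¹ • y 2, b • y 3, b • y 4] : Fin 5 → L) i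
      = cy i • y i := by
    intro i; fin_cases i <;> simp [hcy]
  have hcxy : ∀ i, cx i * cy i = 1 := by
    intro i; fin_cases i <;> simp [hcx, hcy, hb]
  have hcyx : ∀ i, cy i * cx i = 1 := fun i => by rw [mul_comm]; exact hcxy i
  have hcx0 : ∀ i, cx i ≠ 0 := by
    intro i; fin_cases i <;> simp [hcx, hb, inv_ne_zero]
  have hcy0 : ∀ i, cy i ≠ 0 := by
    intro i; fin_cases i <;> simp [hcy, hb, inv_ne_zero]
  refine ⟨?_, ?_, ?_, ?_, ?_, ?_, ?_, ?_, ?_⟩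
  · intro i j; simp [hxt, map_smul, hxx]
  · intro i j; simp [hyt, map_smul, hyy]
  · intro i j
    rcases eq_or_ne i j with rfl | hij
    · rw [hxt i, hyt i]
      simp [map_smul, hxy, ← mul_assoc, hcxy i, hcyx i]
    · simp [hxt, hyt, map_smul, hxy, hij]
  · rw [eq_top_iff, ← hspan, Submodule.span_le]
    rintro u (⟨i, rfl⟩ | ⟨i, rfl⟩)
    · have hm : cx i • x i ∈ Set.range (![x 0, b • x 1, b • x 2, b⁻¹ • x 3, b⁻¹ • x 4])
          ∪ Set.range (![y 0, b⁻¹ • y 1, b⁻¹ • y 2, b • y 3, b • y 4]) :=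
        Or.inl ⟨i, hxt i⟩
      have h2 := Submodule.smul_mem _ (cx i)⁻¹ (Submodule.subset_span hm)
      rwa [smul_smul, inv_mul_cancel₀ (hcx0 i), one_smul] at h2
    · have hm : cy i • y i ∈ Set.range (![x 0, b • x 1, b • x 2, b⁻¹ • x 3, b⁻¹ • x 4])
          ∪ Set.range (![y 0, b⁻¹ • y 1, b⁻¹ • y 2, b • y 3, b • y 4]) :=
        Or.inr ⟨i, hyt i⟩
      have h2 := Submodule.smul_mem _ (cy i)⁻¹ (Submodule.subset_span hm)
      rwa [smul_smul, inv_mul_cancel₀ (hcy0 i), one_smul] at h2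
  · rw [hxt 1, hyt 3, hyt 4]
    simp only [map_smul, LinearMap.smul_apply, smul_eq_mul, hg1]
    rw [show cx 1 = b from rfl, show cy 3 = b from rfl, show cy 4 = b from rfl, hseq]
    ring
  · rw [hxt 0, hyt 1, hyt 3]
    simp only [map_smul, LinearMap.smul_apply, smul_eq_mul, hg2]
    rw [show cx 0 = 1 from rfl, show cy 1 = b⁻¹ from rfl, show cy 3 = b from rfl]
    field_simp
  · rw [hyt 0, hyt 1, hyt 4]
    simp only [map_smul, LinearMap.smul_apply, smul_eq_mul, hg3]
    rw [show cy 0 = 1 from rfl, show cy 1 = b⁻¹ from rfl, show cy 4 = b from rfl]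
    field_simp
  · rw [hyt 0, hyt 2, hyt 4]
    simp only [map_smul, LinearMap.smul_apply, smul_eq_mul, hg4]
    rw [show cy 0 = 1 from rfl, show cy 2 = b⁻¹ from rfl, show cy 4 = b from rfl]
    field_simp
  · intro u hu v hv w hw n1 n2 n3 n4
    have hmem : ∀ z, z ∈ Set.range (![x 0, b • x 1, b • x 2, b⁻¹ • x 3, b⁻¹ • x 4])
        ∪ Set.range (![y 0, b⁻¹ • y 1, b⁻¹ • y 2, b • y 3, b • y 4]) →
        ∃ a : I10, z = Sum.elim cx cy a • ee x y a := by
      rintro z (⟨i, rfl⟩ | ⟨i, rfl⟩)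
      · exact ⟨.inl i, hxt i⟩
      · exact ⟨.inr i, hyt i⟩
    obtain ⟨a1, rfl⟩ := hmem u hu
    obtain ⟨a2, rfl⟩ := hmem v hv
    obtain ⟨a3, rfl⟩ := hmem w hw
    suffices hTz : S.form (S.mul (ee x y a1) (ee x y a2)) (ee x y a3) = 0 by
      simp [map_smul, hTz]
    rw [T_ee h]
    rw [hxt 1, hyt 3, hyt 4] at n1
    rw [hxt 0, hyt 1, hyt 3] at n2
    rw [hyt 0, hyt 1, hyt 4] at n3
    rw [hyt 0, hyt 2, hyt 4] at n4
    refine Tval_eq_zero r ?_ ?_ ?_ ?_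
    · intro hfin
      rcases triple_perm_finset (by decide) (by decide) (by decide) hfin with
        ⟨rfl,rfl,rfl⟩|⟨rfl,rfl,rfl⟩|⟨rfl,rfl,rfl⟩|⟨rfl,rfl,rfl⟩|⟨rfl,rfl,rfl⟩|⟨rfl,rfl,rfl⟩ <;>
        · apply n1
          apply triple_set_perm_eq
          first
          | exact Or.inl ⟨rfl, rfl, rfl⟩
          | exact Or.inr (Or.inl ⟨rfl, rfl, rfl⟩)
          | exact Or.inr (Or.inr (Or.inl ⟨rfl, rfl, rfl⟩))
          | exact Or.inr (Or.inr (Or.inr (Or.inl ⟨rfl, rfl, rfl⟩)))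
          | exact Or.inr (Or.inr (Or.inr (Or.inr (Or.inl ⟨rfl, rfl, rfl⟩))))
          | exact Or.inr (Or.inr (Or.inr (Or.inr (Or.inr ⟨rfl, rfl, rfl⟩))))
    · intro hfin
      rcases triple_perm_finset (by decide) (by decide) (by decide) hfin with
        ⟨rfl,rfl,rfl⟩|⟨rfl,rfl,rfl⟩|⟨rfl,rfl,rfl⟩|⟨rfl,rfl,rfl⟩|⟨rfl,rfl,rfl⟩|⟨rfl,rfl,rfl⟩ <;>
        · apply n2
          apply triple_set_perm_eq
          first
          | exact Or.inl ⟨rfl, rfl, rfl⟩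
          | exact Or.inr (Or.inl ⟨rfl, rfl, rfl⟩)
          | exact Or.inr (Or.inr (Or.inl ⟨rfl, rfl, rfl⟩))
          | exact Or.inr (Or.inr (Or.inr (Or.inl ⟨rfl, rfl, rfl⟩)))
          | exact Or.inr (Or.inr (Or.inr (Or.inr (Or.inl ⟨rfl, rfl, rfl⟩))))
          | exact Or.inr (Or.inr (Or.inr (Or.inr (Or.inr ⟨rfl, rfl, rfl⟩))))
    · intro hfin
      rcases triple_perm_finset (by decide) (by decide) (by decide) hfin with
        ⟨rfl,rfl,rfl⟩|⟨rfl,rfl,rfl⟩|⟨rfl,rfl,rfl⟩|⟨rfl,rfl,rfl⟩|⟨rfl,rfl,rfl⟩|⟨rfl,rfl,rfl⟩ <;>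
        · apply n3
          apply triple_set_perm_eq
          first
          | exact Or.inl ⟨rfl, rfl, rfl⟩
          | exact Or.inr (Or.inl ⟨rfl, rfl, rfl⟩)
          | exact Or.inr (Or.inr (Or.inl ⟨rfl, rfl, rfl⟩))
          | exact Or.inr (Or.inr (Or.inr (Or.inl ⟨rfl, rfl, rfl⟩)))
          | exact Or.inr (Or.inr (Or.inr (Or.inr (Or.inl ⟨rfl, rfl, rfl⟩))))
          | exact Or.inr (Or.inr (Or.inr (Or.inr (Or.inr ⟨rfl, rfl, rfl⟩))))
    · intro hfin
      rcases triple_perm_finset (by decide) (by decide) (by decide) hfin with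
        ⟨rfl,rfl,rfl⟩|⟨rfl,rfl,rfl⟩|⟨rfl,rfl,rfl⟩|⟨rfl,rfl,rfl⟩|⟨rfl,rfl,rfl⟩|⟨rfl,rfl,rfl⟩ <;>
        · apply n4
          apply triple_set_perm_eq
          first
          | exact Or.inl ⟨rfl, rfl, rfl⟩
          | exact Or.inr (Or.inl ⟨rfl, rfl, rfl⟩)
          | exact Or.inr (Or.inr (Or.inl ⟨rfl, rfl, rfl⟩))
          | exact Or.inr (Or.inr (Or.inr (Or.inl ⟨rfl, rfl, rfl⟩)))
          | exact Or.inr (Or.inr (Or.inr (Or.inr (Or.inl ⟨rfl, rfl, rfl⟩))))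
          | exact Or.inr (Or.inr (Or.inr (Or.inr (Or.inr ⟨rfl, rfl, rfl⟩))))

end Rescale

theorem stmt_18 (F : Type*) [Field F] (hcube : ∀ c : F, ∃ b : F, b ^ 3 = c)
    (L : Type*) [AddCommGroup L] [Module F L] [FiniteDimensional F L]
    (L' : Type*) [AddCommGroup L'] [Module F L'] [FiniteDimensional F L']
    (S : SAA F L) (S' : SAA F L') (r s : F) (hr : r ≠ 0) (hs : s ≠ 0)
    (x y : Fin 5 → L) (hP : IsPres36 S x y r)
    (x' y' : Fin 5 → L') (hP' : IsPres36 S' x' y' s) :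
    (∃ φ : L ≃ₗ[F] L',
      (∀ a b : L, S'.form (φ a) (φ b) = S.form a b) ∧
      (∀ a b : L, φ (S.mul a b) = S'.mul (φ a) (φ b))) ∧
    (∀ b : F, b ≠ 0 → s = r * b ^ 3 →
      IsPres36 S ![x 0, b • x 1, b • x 2, b⁻¹ • x 3, b⁻¹ • x 4]
        ![y 0, b⁻¹ • y 1, b⁻¹ • y 2, b • y 3, b • y 4] s) := by
  constructor
  · obtain ⟨b, hb3⟩ := hcube (s / r)
    have hb : b ≠ 0 := by
      intro h0
      have h1 : s / r = 0 := by rw [← hb3, h0]; ring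
      rcases div_eq_zero_iff.mp h1 with h' | h'
      · exact hs h'
      · exact hr h'
    have hseq : s = r * b ^ 3 := by rw [hb3]; field_simp
    exact iso_of_pres (rescale hP b hb hseq) hP'
  · intro b hb hseq
    exact rescale hP b hb hseq
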